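/- Let K/F be a finite separable field extension, let (b_i)_{i∈ι} be an F-basis of K indexed by a finite type ι, and let c ∈ K. Then the determinant of the ι×ι matrix whose (i,j) entry is Tr_{K/F}(c · b_i · b_j) equals discr_F(b) · Norm_{K/F}(c), where discr_F(b) is the discriminant of the basis b, i.e. the determinant of the trace matrix (Tr_{K/F}(b_i·b_j)). -/

import Mathlib

/-- For a finite separable field extension `K/F` with `F`-basis `b : ι → K` and `c ∈ K`, the
determinant of the matrix `(Tr_{K/F} (c * bᵢ * bⱼ))` equals `discr_F b * Norm_{K/F} c`. -/
theorem det_traceMatrix_smul_eq_discr_mul_norm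
    (F K : Type*) [Field F] [Field K] [Algebra F K] [FiniteDimensional F K]
    [Algebra.IsSeparable F K] (ι : Type*) [Fintype ι] [DecidableEq ι]
    (b : Module.Basis ι F K) (c : K) :
    (Matrix.of fun i j : ι => Algebra.trace F K (c * b i * b j)).det =
      Algebra.discr F ⇑b * Algebra.norm F c := by
  have key : (Matrix.of fun i j : ι => Algebra.trace F K (c * b i * b j)) =
      (Algebra.leftMulMatrix b c).transpose * Algebra.traceMatrix F b := by
    ext i j
    rw [Matrix.mul_apply, Matrix.of_apply]
    have hc : c * b i = ∑ k, Algebra.leftMulMatrix b c k i • b k := by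
      conv_lhs => rw [← b.sum_repr (c * b i)]
      refine Finset.sum_congr rfl fun k _ => ?_
      rw [Algebra.leftMulMatrix_eq_repr_mul]
    calc Algebra.trace F K (c * b i * b j)
        = Algebra.trace F K ((∑ k, Algebra.leftMulMatrix b c k i • b k) * b j) := by rw [hc]
      _ = ∑ k, Algebra.leftMulMatrix b c k i * Algebra.trace F K (b k * b j) := by
          rw [Finset.sum_mul, map_sum]
          exact Finset.sum_congr rfl fun k _ => by rw [smul_mul_assoc, map_smul, smul_eq_mul]
      _ = ∑ k, (Algebra.leftMulMatrix b c).transpose i k * Algebra.traceMatrix F b k j := rfl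
  rw [key, Matrix.det_mul, Matrix.det_transpose, ← Algebra.norm_eq_matrix_det,
    Algebra.discr_def, mul_comm]
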